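/- arXiv:1501.06862 — 2 statements merged into one kernel-verified Lean document; each statement's English description precedes it below -/
import Mathlib

section
/- Let a, b ∈ ℝ with a > b > 0 and let C = t² + 1 + ε(b·j·t + a·i) ∈ DH[t]. Set k₁ = −((a²−b²)·i − 2ab·k)/(a²+b²) − ε·((a²−b²)/(a²+b²))·j, k₂ = ((a²−b²)·i − 2ab·k)/(a²+b²) − ε·(((a²+b²)² − 2b(a²−b²))/(2b(a²+b²)))·j, k₃ = −i + ε·((a²−b²+2b)/(2b))·j, and k₄ = i − ε·j. Then (t² + 1)·C = (t − k₁)·(t − k₂)·(t − k₃)·(t − k₄). -/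
open Polynomial
noncomputable section

/-- The dual quaternions: dual numbers over the real quaternions. -/
abbrev DH : Type := DualNumber (Quaternion ℝ)

/-- Dual quaternion conjugation: the conjugate of `p + εq` is `p̄ + εq̄`. -/
def dconj (h : DH) : DH :=
  TrivSqZeroExt.inl (star (TrivSqZeroExt.fst h)) + TrivSqZeroExt.inr (star (TrivSqZeroExt.snd h))

/-- Coefficientwise conjugation of a dual quaternion polynomial. -/
def pconj (P : Polynomial DH) : Polynomial DH :=
  P.sum fun n a => Polynomial.monomial n (dconj a)

/-- The quaternion unit i. -/
def qi : Quaternion ℝ := ⟨0,1,0,0⟩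
/-- The quaternion unit j. -/
def qj : Quaternion ℝ := ⟨0,0,1,0⟩
/-- The quaternion unit k. -/
def qk : Quaternion ℝ := ⟨0,0,0,1⟩

/-- A dual quaternion polynomial is real if all its coefficients are real scalars. -/
def IsRealPoly (P : Polynomial DH) : Prop :=
  ∃ r : Polynomial ℝ, P = r.map (algebraMap ℝ DH)

/-- The primal part of a dual quaternion polynomial. -/
def primalPart (C : Polynomial DH) : Polynomial (Quaternion ℝ) :=
  C.sum fun n a => Polynomial.monomial n (TrivSqZeroExt.fst a)

lemma trip_expand {R : Type*} [Ring R] (p q : R) :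
    (X + C p) * (X + C q) = X^2 + C (p+q) * X + C (p*q) := by
  simp only [mul_add, add_mul]
  simp only [← monomial_one_one_eq_X, monomial_pow, one_pow, monomial_mul_monomial,
    C_mul_monomial, monomial_mul_C, ← C_mul, map_add, mul_one, one_mul, add_mul, mul_add]
  norm_num
  abel

lemma quart_expand {R : Type*} [Ring R] (s m s' m' : R) :
    (X^2 + C s * X + C m) * (X^2 + C s' * X + C m') =
      X^4 + C (s+s') * X^3 + C (m + m' + s*s') * X^2 + C (s*m' + m*s') * X + C (m*m') := by
  simp only [mul_add, add_mul]
  simp only [← monomial_one_one_eq_X, monomial_pow, one_pow, monomial_mul_monomial,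
    C_mul_monomial, monomial_mul_C, ← C_mul, map_add, mul_one, one_mul, add_mul, mul_add]
  norm_num
  abel

lemma four_factors {R : Type*} [Ring R] (k1 k2 k3 k4 u v : R)
    (e3 : (-k1 + -k2) + (-k3 + -k4) = 0 + u)
    (e2 : -k1 * -k2 + -k3 * -k4 + (-k1 + -k2) * (-k3 + -k4) = 1 + (1 + v) + 0 * u)
    (e1 : (-k1 + -k2) * (-k3 * -k4) + -k1 * -k2 * (-k3 + -k4) = 0 * (1 + v) + 1 * u)
    (e0 : -k1 * -k2 * (-k3 * -k4) = 1 * (1 + v)) :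
    ((X : Polynomial R) ^ 2 + 1) * ((X : Polynomial R) ^ 2 + 1 + C u * X + C v) =
      (X - C k1) * (X - C k2) * (X - C k3) * (X - C k4) := by
  have f : ∀ k : R, X - C k = X + C (-k) := fun k => by rw [map_neg, sub_eq_add_neg]
  have h2 : (X : Polynomial R)^2 + 1 + C u * X + C v = X^2 + C u * X + C (1 + v) := by
    rw [map_add, C_1]; abel
  have h1 : (X : Polynomial R)^2 + 1 = X^2 + C (0:R) * X + C 1 := by simp
  rw [h2, h1, f k1, f k2, f k3, f k4, mul_assoc, trip_expand, trip_expand, quart_expand,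
    quart_expand, e3, e2, e1, e0]

@[simp] lemma qi_re : qi.re = 0 := rfl
@[simp] lemma qi_imI : qi.imI = 1 := rfl
@[simp] lemma qi_imJ : qi.imJ = 0 := rfl
@[simp] lemma qi_imK : qi.imK = 0 := rfl
@[simp] lemma qj_re : qj.re = 0 := rfl
@[simp] lemma qj_imI : qj.imI = 0 := rfl
@[simp] lemma qj_imJ : qj.imJ = 1 := rfl
@[simp] lemma qj_imK : qj.imK = 0 := rfl
@[simp] lemma qk_re : qk.re = 0 := rfl
@[simp] lemma qk_imI : qk.imI = 0 := rfl
@[simp] lemma qk_imJ : qk.imJ = 0 := rfl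
@[simp] lemma qk_imK : qk.imK = 1 := rfl

set_option maxHeartbeats 1600000 in
/-- A non-planar factorization of the elliptic translation via the multiplication
trick: with `k₁, k₂, k₃, k₄` as given, `(t² + 1)·C = (t-k₁)(t-k₂)(t-k₃)(t-k₄)`. -/
theorem multiplication_trick_elliptic_translation_nonplanar (a b : ℝ)
    (hab : a > b) (hb : b > 0) :
    ((X : Polynomial DH) ^ 2 + 1) *
        ((X : Polynomial DH) ^ 2 + 1 +
          Polynomial.C (TrivSqZeroExt.inr (b • qj)) * X +
          Polynomial.C (TrivSqZeroExt.inr (a • qi))) =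
      (X - Polynomial.C
        (TrivSqZeroExt.inl (-((a ^ 2 + b ^ 2)⁻¹ • ((a ^ 2 - b ^ 2) • qi - (2 * a * b) • qk))) -
         TrivSqZeroExt.inr (((a ^ 2 - b ^ 2) / (a ^ 2 + b ^ 2)) • qj))) *
      (X - Polynomial.C
        (TrivSqZeroExt.inl ((a ^ 2 + b ^ 2)⁻¹ • ((a ^ 2 - b ^ 2) • qi - (2 * a * b) • qk)) -
         TrivSqZeroExt.inr
           ((((a ^ 2 + b ^ 2) ^ 2 - 2 * b * (a ^ 2 - b ^ 2)) / (2 * b * (a ^ 2 + b ^ 2))) • qj))) *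
      (X - Polynomial.C
        (TrivSqZeroExt.inl (-qi) +
         TrivSqZeroExt.inr (((a ^ 2 - b ^ 2 + 2 * b) / (2 * b)) • qj))) *
      (X - Polynomial.C (TrivSqZeroExt.inl qi - TrivSqZeroExt.inr qj)) := by
  have hb' : b ≠ 0 := ne_of_gt hb
  have hab2 : a ^ 2 + b ^ 2 ≠ 0 := by positivity
  apply four_factors
  all_goals refine TrivSqZeroExt.ext ?_ ?_
  all_goals simp [TrivSqZeroExt.fst_mul, TrivSqZeroExt.snd_mul, op_smul_eq_mul, smul_eq_mul,
      Quaternion.ext_iff, QuaternionAlgebra.mk_mul_mk, Quaternion.re_one, Quaternion.imI_one,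
      Quaternion.imJ_one, Quaternion.imK_one]
  all_goals field_simp
  all_goals ring_nf
  all_goals tauto
end
end

section
/- Let a, b, c ∈ ℝ \ {0} and let C ∈ DH[t] be the motion polynomial of the line symmetric motion with respect to one family of rulings of the hyperboloid x²b²c² + y²a²c² − z²a²b² = a²b²c², namely C = (b²+c²)t² + (2a(c·j + b·k) − 2ε(a²(b·j − c·k) − bc(b·k + c·j)))t + 2bc·i − b² + c² − 2aε((b²−c²)·i + 2bc). If a = b, then the norm polynomial satisfies C·C̄ = (a²+c²)²·(t²+1)². -/
open Polynomial
noncomputable section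

/- ### Auxiliary lemmas -/

lemma dconj_zero : dconj 0 = 0 := by simp [dconj]

lemma dconj_add' (x y : DH) : dconj (x + y) = dconj x + dconj y := by
  simp only [dconj, TrivSqZeroExt.fst_add, TrivSqZeroExt.snd_add, star_add,
    TrivSqZeroExt.inl_add, TrivSqZeroExt.inr_add]; abel

lemma pconj_add (P Q : Polynomial DH) : pconj (P + Q) = pconj P + pconj Q := by
  unfold pconj
  apply Polynomial.sum_add_index <;> intros <;> simp [dconj_zero, dconj_add']

lemma pconj_monomial (n : ℕ) (a : DH) :
    pconj (Polynomial.monomial n a) = Polynomial.monomial n (dconj a) := by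
  unfold pconj
  rw [Polynomial.sum_monomial_index]
  simp [dconj_zero]

lemma pconj_CX (a : DH) (n : ℕ) :
    pconj (Polynomial.C a * X ^ n) = Polynomial.C (dconj a) * X ^ n := by
  rw [Polynomial.C_mul_X_pow_eq_monomial, Polynomial.C_mul_X_pow_eq_monomial]
  exact pconj_monomial n a

lemma pconj_C (a : DH) : pconj (Polynomial.C a) = Polynomial.C (dconj a) := by
  have := pconj_CX a 0
  simpa using this

lemma pconj_CX1 (a : DH) :
    pconj (Polynomial.C a * X) = Polynomial.C (dconj a) * X := by
  have := pconj_CX a 1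
  simpa using this

lemma CXmul (a b : DH) (n m : ℕ) :
    (Polynomial.C a * X^n) * (Polynomial.C b * X^m) = Polynomial.C (a*b) * X^(n+m) := by
  rw [mul_assoc, ← mul_assoc (X^n), Polynomial.X_pow_mul, mul_assoc, ← pow_add,
    ← mul_assoc, ← Polynomial.C_mul]

lemma mul_expand (c2 c1 c0 d2 d1 d0 : DH) :
    (Polynomial.C c2 * X^2 + Polynomial.C c1 * X + Polynomial.C c0) *
    (Polynomial.C d2 * X^2 + Polynomial.C d1 * X + Polynomial.C d0)
    = Polynomial.C (c2*d2) * X^4 + Polynomial.C (c2*d1 + c1*d2) * X^3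
      + Polynomial.C (c2*d0 + c1*d1 + c0*d2) * X^2
      + Polynomial.C (c1*d0 + c0*d1) * X + Polynomial.C (c0*d0) := by
  have h0 : ∀ x : DH, Polynomial.C x = Polynomial.C x * X^0 := by intro x; simp
  rw [h0 c0, h0 d0, h0 (c2*d0 + c1*d1 + c0*d2), h0 (c0*d0)]
  rw [show (Polynomial.C c1 * X) = Polynomial.C c1 * X^1 by rw [pow_one],
      show (Polynomial.C d1 * X) = Polynomial.C d1 * X^1 by rw [pow_one],
      show (Polynomial.C (c1*d0+c0*d1) * X) = Polynomial.C (c1*d0+c0*d1) * X^1 by rw [pow_one]]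
  simp only [add_mul, mul_add, CXmul, Polynomial.C_add]
  norm_num
  abel

/-- The motion polynomial of the line symmetric motion with respect to one family of
rulings of the hyperboloid `x²b²c² + y²a²c² − z²a²b² = a²b²c²`:
`C = (b²+c²)t² + (2a(c·j + b·k) − 2ε(a²(b·j − c·k) − bc(b·k + c·j)))t
     + 2bc·i − b² + c² − 2aε((b²−c²)·i + 2bc)`. -/
def lineSymC (a b c : ℝ) : Polynomial DH :=
  Polynomial.C (algebraMap ℝ DH (b ^ 2 + c ^ 2)) * X ^ 2 +
  Polynomial.C (TrivSqZeroExt.inl ((2 * a) • (c • qj + b • qk)) -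
    TrivSqZeroExt.inr ((2 : ℝ) •
      (a ^ 2 • (b • qj - c • qk) - (b * c) • (b • qk + c • qj)))) * X +
  Polynomial.C (TrivSqZeroExt.inl
      ((2 * b * c) • qi + algebraMap ℝ (Quaternion ℝ) (c ^ 2 - b ^ 2)) -
    TrivSqZeroExt.inr ((2 * a) •
      ((b ^ 2 - c ^ 2) • qi + algebraMap ℝ (Quaternion ℝ) (2 * b * c))))


lemma q_comp :
    qi.re = 0 ∧ qi.imI = 1 ∧ qi.imJ = 0 ∧ qi.imK = 0 ∧
    qj.re = 0 ∧ qj.imI = 0 ∧ qj.imJ = 1 ∧ qj.imK = 0 ∧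
    qk.re = 0 ∧ qk.imI = 0 ∧ qk.imJ = 0 ∧ qk.imK = 1 := by
  simp [qi, qj, qk]

set_option maxHeartbeats 4000000 in
/-- If `a = b` (hyperboloid of revolution), the norm polynomial of the line symmetric
motion satisfies `C·C̄ = (a²+c²)²(t²+1)²`. -/
theorem line_symmetric_norm_of_revolution (a b c : ℝ)
    (ha : a ≠ 0) (hb : b ≠ 0) (hc : c ≠ 0) (hab : a = b) :
    lineSymC a b c * pconj (lineSymC a b c) =
      Polynomial.C (algebraMap ℝ DH ((a ^ 2 + c ^ 2) ^ 2)) *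
        ((X : Polynomial DH) ^ 2 + 1) ^ 2 := by
  subst hab
  set c2 : DH := algebraMap ℝ DH (a ^ 2 + c ^ 2) with hc2
  set c1 : DH := TrivSqZeroExt.inl ((2 * a) • (c • qj + a • qk)) -
    TrivSqZeroExt.inr ((2 : ℝ) •
      (a ^ 2 • (a • qj - c • qk) - (a * c) • (a • qk + c • qj))) with hc1
  set c0 : DH := TrivSqZeroExt.inl
      ((2 * a * c) • qi + algebraMap ℝ (Quaternion ℝ) (c ^ 2 - a ^ 2)) -
    TrivSqZeroExt.inr ((2 * a) •
      ((a ^ 2 - c ^ 2) • qi + algebraMap ℝ (Quaternion ℝ) (2 * a * c))) with hc0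
  have hL : lineSymC a a c = Polynomial.C c2 * X^2 + Polynomial.C c1 * X + Polynomial.C c0 := by
    rw [lineSymC, hc2, hc1, hc0]
  have hP : pconj (lineSymC a a c)
      = Polynomial.C (dconj c2) * X^2 + Polynomial.C (dconj c1) * X + Polynomial.C (dconj c0) := by
    rw [hL, pconj_add, pconj_add, pconj_CX, pconj_CX1, pconj_C]
  set r : DH := algebraMap ℝ DH ((a ^ 2 + c ^ 2) ^ 2) with hr
  have e4 : c2 * dconj c2 = r := by
    rw [hc2, hr]
    apply TrivSqZeroExt.ext <;> apply Quaternion.ext <;>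
    simp [dconj, qi, qj, qk, TrivSqZeroExt.fst_mul, TrivSqZeroExt.snd_mul, Quaternion.re_mul, Quaternion.imI_mul, Quaternion.imJ_mul, Quaternion.imK_mul,
      TrivSqZeroExt.algebraMap_eq_inl', ← Quaternion.coe_pow, ← Quaternion.coe_mul,
      ← Quaternion.coe_add, Quaternion.re_coe, Quaternion.imI_coe, Quaternion.imJ_coe,
      Quaternion.imK_coe] <;> try ring
  have e3 : c2 * dconj c1 + c1 * dconj c2 = 0 := by
    rw [hc2, hc1]
    apply TrivSqZeroExt.ext <;> apply Quaternion.ext <;>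
    simp [dconj, q_comp, TrivSqZeroExt.fst_mul, TrivSqZeroExt.snd_mul, Quaternion.re_mul, Quaternion.imI_mul, Quaternion.imJ_mul, Quaternion.imK_mul,
      TrivSqZeroExt.algebraMap_eq_inl', ← Quaternion.coe_pow, ← Quaternion.coe_mul,
      ← Quaternion.coe_add, Quaternion.re_coe, Quaternion.imI_coe, Quaternion.imJ_coe,
      Quaternion.imK_coe, Quaternion.re_smul, Quaternion.re_zero, Quaternion.imI_zero, Quaternion.imJ_zero, Quaternion.imK_zero] <;> try ring
  have e2 : c2 * dconj c0 + c1 * dconj c1 + c0 * dconj c2 = r + r := by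
    rw [hc2, hc1, hc0, hr]
    apply TrivSqZeroExt.ext <;> apply Quaternion.ext <;>
    simp [dconj, q_comp, TrivSqZeroExt.fst_mul, TrivSqZeroExt.snd_mul, Quaternion.re_mul, Quaternion.imI_mul, Quaternion.imJ_mul, Quaternion.imK_mul,
      TrivSqZeroExt.algebraMap_eq_inl', ← Quaternion.coe_pow, ← Quaternion.coe_mul,
      ← Quaternion.coe_add, Quaternion.re_coe, Quaternion.imI_coe, Quaternion.imJ_coe,
      Quaternion.imK_coe, Quaternion.re_smul, Quaternion.re_zero, Quaternion.imI_zero, Quaternion.imJ_zero, Quaternion.imK_zero] <;> try ring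
  have e1 : c1 * dconj c0 + c0 * dconj c1 = 0 := by
    rw [hc1, hc0]
    apply TrivSqZeroExt.ext <;> apply Quaternion.ext <;>
    simp [dconj, q_comp, TrivSqZeroExt.fst_mul, TrivSqZeroExt.snd_mul, Quaternion.re_mul, Quaternion.imI_mul, Quaternion.imJ_mul, Quaternion.imK_mul,
      TrivSqZeroExt.algebraMap_eq_inl', ← Quaternion.coe_pow, ← Quaternion.coe_mul,
      ← Quaternion.coe_add, Quaternion.re_coe, Quaternion.imI_coe, Quaternion.imJ_coe,
      Quaternion.imK_coe, Quaternion.re_smul, Quaternion.re_zero, Quaternion.imI_zero, Quaternion.imJ_zero, Quaternion.imK_zero] <;> try ring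
  have e0 : c0 * dconj c0 = r := by
    rw [hc0, hr]
    apply TrivSqZeroExt.ext <;> apply Quaternion.ext <;>
    simp [dconj, q_comp, TrivSqZeroExt.fst_mul, TrivSqZeroExt.snd_mul, Quaternion.re_mul, Quaternion.imI_mul, Quaternion.imJ_mul, Quaternion.imK_mul,
      TrivSqZeroExt.algebraMap_eq_inl', ← Quaternion.coe_pow, ← Quaternion.coe_mul,
      ← Quaternion.coe_add, Quaternion.re_coe, Quaternion.imI_coe, Quaternion.imJ_coe,
      Quaternion.imK_coe, Quaternion.re_smul, Quaternion.re_zero, Quaternion.imI_zero, Quaternion.imJ_zero, Quaternion.imK_zero] <;> try ring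
  rw [hP, hL]
  rw [mul_expand, e4, e3, e2, e1, e0]
  have hXsq : ((X : Polynomial DH)^2 + 1)^2 = X^4 + 2 * X^2 + 1 := by noncomm_ring
  rw [hXsq]
  simp only [mul_add, mul_one, Polynomial.C_0, zero_mul, add_zero]
  rw [show (r + r : DH) = 2 * r from (two_mul r).symm]
  simp only [Polynomial.C_mul, map_ofNat]
  noncomm_ring
end
end
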